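/- Let κ be a regular uncountable cardinal and X = K_{2^κ, κ} the complete bipartite graph with parts A of size κ and B of size 2^κ. Then the restricted list colorability RList(X, κ) fails: there is a list function L : V → [κ]^κ such that no choice function of L is a good coloring. (Identifying A with κ and B with [κ]^κ, set L(v) = κ \ v for v ∈ A and L(S) = S for S ∈ B = [κ]^κ.) -/

import Mathlib

open Cardinal Set

/-- RList(K_{2^κ,κ}, κ) fails. -/
theorem rlist_fails_complete_bipartite {A B : Type} (κ : Cardinal)
    (hreg : κ.IsRegular) (hunc : ℵ₀ < κ)
    (hA : #A = κ) (hB : #B = 2 ^ κ) :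
    ∃ L : A ⊕ B → Set Ordinal,
      (∀ v, L v ⊆ Set.Iio κ.ord ∧ #(L v) = Cardinal.lift.{1} κ) ∧
      ¬ ∃ c : A ⊕ B → Ordinal, (∀ v, c v ∈ L v) ∧
        ∀ v w, (completeBipartiteGraph A B).Adj v w → c v ≠ c w := by
  classical
  have hκ0 : ℵ₀ ≤ κ := hunc.le
  have hℵlift : ℵ₀ ≤ Cardinal.lift.{1} κ := by
    rw [← Cardinal.lift_aleph0.{1,0}]; exact Cardinal.lift_le.2 hκ0
  -- cardinality of Iio κ.ord
  have hIio : #(Set.Iio κ.ord) = Cardinal.lift.{1} κ := by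
    rw [Ordinal.mk_Iio_ordinal, Cardinal.card_ord]
  -- cardinality of Ico α κ.ord
  have hIco : ∀ α : Ordinal, α < κ.ord → #(Set.Ico α κ.ord) = Cardinal.lift.{1} κ := by
    intro α hα
    apply le_antisymm
    · exact hIio ▸ Cardinal.mk_le_mk_of_subset (fun x hx => hx.2)
    · by_contra h
      push_neg at h
      have h1 : #(Set.Iio α) < Cardinal.lift.{1} κ := by
        rw [Ordinal.mk_Iio_ordinal]
        exact Cardinal.lift_lt.2 (Cardinal.lt_ord.1 hα)
      have hsub : Set.Iio κ.ord ⊆ Set.Iio α ∪ Set.Ico α κ.ord := by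
        intro x hx
        rcases lt_or_ge x α with h' | h'
        · exact Or.inl h'
        · exact Or.inr ⟨h', hx⟩
      have hle := (hIio ▸ Cardinal.mk_le_mk_of_subset hsub).trans
        (Cardinal.mk_union_le _ _)
      exact absurd hle (not_le.2 (Cardinal.add_lt_of_lt hℵlift h1 h))
  -- enumeration of A
  obtain ⟨e⟩ : Nonempty (A ≃ ↥(Set.Iio κ.ord)) := by
    refine Cardinal.lift_mk_eq'.1 ?_
    rw [hA, Cardinal.lift_uzero, hIio]
  -- the family [κ]^κ
  set F : Set (Set Ordinal) :=
    {S | S ⊆ Set.Iio κ.ord ∧ #S = Cardinal.lift.{1} κ} with hFdef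
  have hFcard : #(↥F) ≤ Cardinal.lift.{1} (2 ^ κ) := by
    have hj : Function.Injective
        (fun S : ↥F => (fun x : ↥(Set.Iio κ.ord) => (x : Ordinal) ∈ (S : Set Ordinal))) := by
      intro S S' h
      ext1
      ext x
      constructor
      · intro hx
        have := congrFun h ⟨x, S.2.1 hx⟩
        exact this.mp hx
      · intro hx
        have := congrFun h ⟨x, S'.2.1 hx⟩
        exact this.mpr hx
    calc #(↥F) ≤ #(↥(Set.Iio κ.ord) → Prop) := Cardinal.mk_le_of_injective hj
      _ = 2 ^ #(↥(Set.Iio κ.ord)) := by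
          rw [← Cardinal.mk_set]; rfl
      _ = Cardinal.lift.{1} (2 ^ κ) := by rw [hIio, Cardinal.lift_two_power]
  obtain ⟨f⟩ : Nonempty (↥F ↪ B) := by
    refine Cardinal.lift_mk_le'.1 ?_
    rw [Cardinal.lift_uzero, hB]
    exact hFcard
  -- define the list function
  refine ⟨Sum.elim (fun a => Set.Ico ((e a : Ordinal)) κ.ord)
      (fun b => if h : ∃ S : ↥F, f S = b then (h.choose : Set Ordinal) else Set.Iio κ.ord),
      ?_, ?_⟩
  · rintro (a | b)
    · exact ⟨fun x hx => hx.2, hIco _ (e a).2⟩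
    · simp only [Sum.elim_inr]
      split
      · next h => exact ⟨h.choose.2.1, h.choose.2.2⟩
      · exact ⟨fun x hx => hx, hIio⟩
  · rintro ⟨c, hmem, hadj⟩
    set T : Set Ordinal := Set.range (fun a : A => c (Sum.inl a)) with hTdef
    have hmemA : ∀ a : A, c (Sum.inl a) ∈ Set.Ico ((e a : Ordinal)) κ.ord := fun a =>
      hmem (Sum.inl a)
    have hTsub : T ⊆ Set.Iio κ.ord := by
      rintro x ⟨a, rfl⟩
      exact (hmemA a).2
    have hTle : #T ≤ Cardinal.lift.{1} κ := by
      have := Cardinal.mk_range_le_lift (f := fun a : A => c (Sum.inl a))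
      rwa [Cardinal.lift_uzero, hA] at this
    have hTge : Cardinal.lift.{1} κ ≤ #T := by
      by_contra h
      push_neg at h
      obtain ⟨μ, hμlt, hμeq⟩ := Cardinal.lt_lift_iff.1 h
      obtain ⟨g⟩ : Nonempty (μ.out ≃ ↥T) := by
        refine Cardinal.lift_mk_eq'.1 ?_
        rw [Cardinal.lift_uzero, Cardinal.mk_out, hμeq]
      set f0 : μ.out → Ordinal := fun i => ((g i : ↥T) : Ordinal) with hf0
      have hβ : iSup f0 < κ.ord := by
        refine Ordinal.iSup_lt_ord ?_ (fun i => hTsub (g i).2)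
        rw [Cardinal.mk_out, hreg.cof_eq]
        exact hμlt
      have hbdd : BddAbove (Set.range f0) := by
        refine ⟨κ.ord, ?_⟩
        rintro x ⟨i, rfl⟩
        exact le_of_lt (hTsub (g i).2)
      have hTbound : ∀ t ∈ T, t ≤ iSup f0 := by
        intro t ht
        have : t = f0 (g.symm ⟨t, ht⟩) := by simp [hf0]
        rw [this]
        exact le_ciSup hbdd _
      have hsucc : Order.succ (iSup f0) < κ.ord :=
        (Cardinal.isSuccLimit_ord hκ0).succ_lt hβ
      set a := e.symm ⟨Order.succ (iSup f0), hsucc⟩ with ha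
      have h1 : Order.succ (iSup f0) ≤ c (Sum.inl a) := by
        have := (hmemA a).1
        rwa [ha, Equiv.apply_symm_apply] at this
      have h2 : c (Sum.inl a) ≤ iSup f0 := hTbound _ ⟨a, rfl⟩
      exact absurd (Order.succ_le_iff.1 (h1.trans h2)) (lt_irrefl _)
    have hTF : T ∈ F := ⟨hTsub, le_antisymm hTle hTge⟩
    set b := f ⟨T, hTF⟩ with hb
    have hLb : c (Sum.inr b) ∈ T := by
      have hmb := hmem (Sum.inr b)
      simp only [Sum.elim_inr] at hmb
      have hex : ∃ S : ↥F, f S = b := ⟨⟨T, hTF⟩, rfl⟩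
      rw [dif_pos hex] at hmb
      have : hex.choose = ⟨T, hTF⟩ := f.injective hex.choose_spec
      rwa [this] at hmb
    obtain ⟨a, ha⟩ := hLb
    exact hadj (Sum.inl a) (Sum.inr b) (by simp) ha
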